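/- Let g be a finite simple Lie algebra of type A_n, B_n, C_n, D_{n+1}, or G_2. If (ν,J) ∈ RC(∞), then (ν,J) ∈ RC(λ_ν); that is, (ν,J) is valid for λ_ν: every rigging x of a string of length i in ν^{(a)} satisfies x ≤ p_i^{(a)}(ν;λ_ν) for all a ∈ I and i > 0. -/

import Mathlib

/-!
Common framework for formalizing "Connecting marginally large tableaux and
rigged configurations via crystals" (Salisbury–Scrimshaw).

Rigged configurations, vacancy numbers, validity, the Kashiwara operators on
rigged configurations, `RC(∞)`, `RC(λ)`, `λ_ν`, `RC^V`, `RC^{EV}` are all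
defined concretely.  The combinatorics of (marginally large / large)
tableaux, Kirillov–Reshetikhin crystals `B^{⊗λ}`, and the
Kerov–Kirillov–Reshetikhin style bijection `Φ` (whose algorithmic definition
via `δ` is far beyond the scope of this file) are packaged abstractly in the
structure `KRSetup`, whose fields record the previously–known properties of
these objects (`Φ` is a shape-preserving bijection between rigged
configurations valid for `λ` and elements of `B^{⊗λ}`, and is a classical
crystal isomorphism).
-/

namespace RCMLT

/-- The five families of finite simple Lie algebras considered in the paper:
`A n` is `A_n`, `B n` is `B_n`, `C n` is `C_n`, `D n` is `D_{n+1}`, and `G` is `G_2`. -/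
inductive GType : Type
  | A (n : ℕ)
  | B (n : ℕ)
  | C (n : ℕ)
  | D (n : ℕ)   -- this stands for `D_{n+1}`
  | G
deriving DecidableEq

/-- The number of nodes of the Dynkin diagram, so that the index set is
`I = Fin (rank g)` (the element `a : Fin (rank g)` represents the node `a+1`
in the paper's indexing). -/
def rank : GType → ℕ
  | .A n => n
  | .B n => n
  | .C n => n
  | .D n => n + 1
  | .G => 2

/-- Entries of the Cartan matrix of a simply laced chain (type `A`). -/
def chainE (a b : ℕ) : ℤ :=
  if a = b then 2 else if a + 1 = b ∨ b + 1 = a then -1 else 0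

/-- The Cartan matrix `A_{ab} = ⟨h_a, α_b⟩` of `g`. -/
def cartan : (g : GType) → Fin (rank g) → Fin (rank g) → ℤ
  | .A _, a, b => chainE a.val b.val
  | .B n, a, b => if a.val = n - 1 ∧ b.val = n - 2 ∧ 2 ≤ n then -2 else chainE a.val b.val
  | .C n, a, b => if a.val = n - 2 ∧ b.val = n - 1 ∧ 2 ≤ n then -2 else chainE a.val b.val
  | .D n, a, b =>
      if ((a.val = n - 2 ∧ b.val = n) ∨ (a.val = n ∧ b.val = n - 2)) ∧ 2 ≤ n then -1
      else if a.val = n ∨ b.val = n then (if a = b then 2 else 0)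
      else chainE a.val b.val
  | .G, a, b => if a = b then 2 else if a.val = 0 then -3 else -1

/-- Integral weights, written in the coordinates of the fundamental weights:
`λ : Wt g` stands for `Σ_a (λ a) Λ_a`, so that `⟨h_a, λ⟩ = λ a`. -/
abbrev Wt (g : GType) := Fin (rank g) → ℤ

/-- A rigged configuration `(ν, J)`: for each node `a`, the multiset of
strings `(i, x)` (a part of length `i` of the partition `ν^{(a)}` together
with its rigging `x`) of `(ν, J)^{(a)}`. -/
abbrev Cfg (g : GType) := Fin (rank g) → Multiset (ℕ × ℤ)

/-- The empty rigged configuration `(ν_∅, J_∅)`. -/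
def emptyCfg (g : GType) : Cfg g := fun _ => 0

/-- The coordinate vector of the fundamental weight `Λ_r`. -/
def fw (g : GType) (r : Fin (rank g)) : Wt g := fun b => if b = r then 1 else 0

/-- `λ` is dominant: all coefficients in the fundamental weights are `≥ 0`. -/
def Dominant (g : GType) (lam : Wt g) : Prop := ∀ a, 0 ≤ lam a

/-- `|ν^{(a)}|`, the number of boxes of the partition recorded by `m`. -/
def psize (m : Multiset (ℕ × ℤ)) : ℤ := (m.map fun s => (s.1 : ℤ)).sum

/-- The vacancy numbers
`p_i^{(a)}(ν; λ) = ⟨h_a, λ⟩ − Σ_{(b,j)} A_{ab} min(i,j) m_j^{(b)}`. -/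
def vac (g : GType) (lam : Wt g) (ν : Cfg g) (a : Fin (rank g)) (i : ℕ) : ℤ :=
  lam a - ∑ b, cartan g a b * ((ν b).map fun s => ((min i s.1 : ℕ) : ℤ)).sum

/-- `(ν, J)` is valid for `λ`: every rigging `x` of a string of length `i` in
`ν^{(a)}` satisfies `x ≤ p_i^{(a)}(ν; λ)`. -/
def Valid (g : GType) (lam : Wt g) (ν : Cfg g) : Prop :=
  ∀ a : Fin (rank g), ∀ s ∈ ν a, s.2 ≤ vac g lam ν a s.1

/-- The Kashiwara lowering operator `f_a` on rigged configurations, as a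
relation: `fRel g a ν ν'` holds iff `f_a (ν, J) = (ν', J')`.  Let `x` be the
smallest rigging in `(ν,J)^{(a)}`.  If `x > 0` (in particular if `ν^{(a)}` is
empty) a string `(1, -1)` is added; otherwise a string `(ℓ, x)` with `ℓ`
maximal is replaced by `(ℓ+1, x-1)`.  All the other riggings are changed so
that all colabels `p_i^{(b)} − x` remain fixed (the colabel differences do
not depend on the weight, so they are computed at weight `0`). -/
def fRel (g : GType) (a : Fin (rank g)) (ν ν' : Cfg g) : Prop :=
  ((∀ s ∈ ν a, 0 < s.2) ∧
     (∀ b, b ≠ a →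
       ν' b = (ν b).map fun s =>
         (s.1, s.2 + vac g (0 : Wt g) ν' b s.1 - vac g (0 : Wt g) ν b s.1)) ∧
     ν' a = (1, -1) ::ₘ ((ν a).map fun s =>
         (s.1, s.2 + vac g (0 : Wt g) ν' a s.1 - vac g (0 : Wt g) ν a s.1))) ∨
  (∃ (l : ℕ) (x : ℤ) (rest : Multiset (ℕ × ℤ)),
     x ≤ 0 ∧ ν a = (l, x) ::ₘ rest ∧
     (∀ s ∈ ν a, x ≤ s.2) ∧ (∀ s ∈ ν a, s.2 = x → s.1 ≤ l) ∧
     (∀ b, b ≠ a →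
       ν' b = (ν b).map fun s =>
         (s.1, s.2 + vac g (0 : Wt g) ν' b s.1 - vac g (0 : Wt g) ν b s.1)) ∧
     ν' a = (l + 1, x - 1) ::ₘ (rest.map fun s =>
         (s.1, s.2 + vac g (0 : Wt g) ν' a s.1 - vac g (0 : Wt g) ν a s.1)))

/-- The Kashiwara raising operator `e_a` on rigged configurations, as a
relation: `eRel g a ν ν'` holds iff `e_a (ν, J) = (ν', J') ≠ 0`.  If the
smallest rigging `x` in `(ν,J)^{(a)}` satisfies `x ≥ 0` then `e_a (ν,J) = 0`
(so no `ν'` is related to `ν`); otherwise a string `(ℓ, x)` with `ℓ` minimal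
is replaced by `(ℓ-1, x+1)` (removed if `ℓ = 1`), and all the other riggings
are changed so that all colabels remain fixed. -/
def eRel (g : GType) (a : Fin (rank g)) (ν ν' : Cfg g) : Prop :=
  ∃ (l : ℕ) (x : ℤ) (rest : Multiset (ℕ × ℤ)),
    x < 0 ∧ ν a = (l, x) ::ₘ rest ∧
    (∀ s ∈ ν a, x ≤ s.2) ∧ (∀ s ∈ ν a, s.2 = x → l ≤ s.1) ∧
    (∀ b, b ≠ a →
      ν' b = (ν b).map fun s =>
        (s.1, s.2 + vac g (0 : Wt g) ν' b s.1 - vac g (0 : Wt g) ν b s.1)) ∧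
    ν' a = (if l = 1 then (0 : Multiset (ℕ × ℤ)) else {(l - 1, x + 1)}) +
      (rest.map fun s =>
        (s.1, s.2 + vac g (0 : Wt g) ν' a s.1 - vac g (0 : Wt g) ν a s.1))

/-- `RC(∞)`: the set of rigged configurations generated from the empty rigged
configuration by the operators `f_a`. -/
inductive RCInf (g : GType) : Cfg g → Prop
  | empty : RCInf g (emptyCfg g)
  | step {a : Fin (rank g)} {ν ν' : Cfg g} : RCInf g ν → fRel g a ν ν' → RCInf g ν'

/-- `RC(λ)`: the closure of the empty rigged configuration under the modified
operators `f_a`, where `f_a (ν, J) = 0` whenever the result is not valid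
for `λ`. -/
inductive RCPoly (g : GType) (lam : Wt g) : Cfg g → Prop
  | empty : RCPoly g lam (emptyCfg g)
  | step {a : Fin (rank g)} {ν ν' : Cfg g} :
      RCPoly g lam ν → fRel g a ν ν' → Valid g lam ν' → RCPoly g lam ν'

/-- The dominant weight `λ_ν`:
`λ_ν = Σ_{a < n} (|ν^{(a)}|+1) Λ_a + λ_ν^{(n)}`, where the last part is
`2(|ν^{(n)}|+1) Λ_n` in type `B_n`,
`(max(|ν^{(n)}|, |ν^{(n+1)}|)+1)(Λ_n + Λ_{n+1})` in type `D_{n+1}`, and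
`(|ν^{(n)}|+1) Λ_n` otherwise. -/
def lambdaNu : (g : GType) → Cfg g → Wt g
  | .A _, ν => fun a => psize (ν a) + 1
  | .B n, ν => fun a => if a.val = n - 1 then 2 * (psize (ν a) + 1) else psize (ν a) + 1
  | .C _, ν => fun a => psize (ν a) + 1
  | .D n, ν => fun a =>
      if a.val = n - 1 ∨ a.val = n then
        max (psize (ν ⟨n - 1, by simp only [rank]; omega⟩))
            (psize (ν ⟨n, by simp only [rank]; omega⟩)) + 1
      else psize (ν a) + 1
  | .G, ν => fun a => psize (ν a) + 1

/-- `(ν, J, λ) ∈ RC^{EV}`: the representative `(ν, J)` lies in `RC(λ)` for a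
dominant weight `λ ≥ λ_ν` (componentwise in the fundamental-weight
coordinates). -/
def RCEV (g : GType) (ν : Cfg g) (lam : Wt g) : Prop :=
  Dominant g lam ∧ RCPoly g lam ν ∧ ∀ a, lambdaNu g ν a ≤ lam a

/-- The coordinates of `wt (ν, J) = −Σ_a |ν^{(a)}| α_a`:
`⟨h_b, wt (ν, J)⟩ = −Σ_a |ν^{(a)}| A_{ba}`. -/
def wtRC (g : GType) (ν : Cfg g) (b : Fin (rank g)) : ℤ :=
  -∑ a, psize (ν a) * cartan g b a

/-- `k`-fold iteration of the raising operator `e_a`. -/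
def eIter (g : GType) (a : Fin (rank g)) : ℕ → Cfg g → Cfg g → Prop
  | 0, ν, ν' => ν' = ν
  | k + 1, ν, ν'' => ∃ ν', eRel g a ν ν' ∧ eIter g a k ν' ν''

/-- `ε_a (ν, J) = max {k ≥ 0 | e_a^k (ν, J) ≠ 0}`. -/
noncomputable def epsRC (g : GType) (a : Fin (rank g)) (ν : Cfg g) : ℕ :=
  sSup {k : ℕ | ∃ μ, eIter g a k ν μ}

/-- `φ_a (ν, J) = ε_a (ν, J) + ⟨h_a, wt (ν, J)⟩`. -/
noncomputable def phiRC (g : GType) (a : Fin (rank g)) (ν : Cfg g) : ℤ :=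
  (epsRC g a ν : ℤ) + wtRC g ν a

/-- An abstract `U_q(g)`-crystal structure on a set `B`: maps
`e_a, f_a : B → B ⊔ {0}`, `ε_a, φ_a : B → ℤ` and `wt : B → P` (in
fundamental-weight coordinates) such that (1) `f_a b = b'` iff `b = e_a b'`;
(2) `wt (f_a b) = wt b − α_a` when `f_a b ≠ 0`; (3) `φ_a − ε_a = ⟨h_a, wt⟩`. -/
structure CrystalStruct (g : GType) (B : Type) where
  e : Fin (rank g) → B → Option B
  f : Fin (rank g) → B → Option B
  wt : B → Wt g
  eps : Fin (rank g) → B → ℤ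
  phi : Fin (rank g) → B → ℤ
  ef_iff : ∀ a b b', f a b = some b' ↔ e a b' = some b
  wt_f : ∀ a b b', f a b = some b' → ∀ c, wt b' c = wt b c - cartan g c a
  phi_eps : ∀ a b, phi a b - eps a b = wt b a

/-- Abstract packaging of the tableaux models (`⊔_{λ} B^{⊗λ}`, the large,
marginally large and semistandard tableaux inside it, basic columns) together
with the bijection `Φ : RC(B^{⊗λ}) → B^{⊗λ}` of
Kerov–Kirillov–Reshetikhin/Okado–Schilling–Shimozono type and its previously
known properties (it is a shape-preserving bijection and a classical crystal
isomorphism), and the marginally large tableaux crystal operators of `T(∞)`. -/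
structure KRSetup (g : GType) where
  /-- elements of `⊔_{λ ∈ P̂⁺} B^{⊗λ}` (tensor products of columns). -/
  Tab : Type
  /-- the weight `λ` with `t ∈ B^{⊗λ}`; for a tableau, its shape. -/
  shape : Tab → Wt g
  /-- the classical crystal operator `f_a` on `B^{⊗λ}`. -/
  ftab : Fin (rank g) → Tab → Option Tab
  /-- the classical crystal operator `e_a` on `B^{⊗λ}`. -/
  etab : Fin (rank g) → Tab → Option Tab
  /-- `t` is (the column reading of) a semistandard tableau. -/
  IsTableau : Tab → Prop
  /-- `t` is a large tableau. -/
  Large : Tab → Prop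
  /-- `t` is a marginally large tableau. -/
  MarginallyLarge : Tab → Prop
  /-- `t` and `t'` differ only by basic columns. -/
  BasicEquiv : Tab → Tab → Prop
  basicEquiv_equiv : Equivalence BasicEquiv
  ml_large : ∀ t, MarginallyLarge t → Large t
  /-- the highest weight tableau `T_λ` (a tensor product of basic columns). -/
  highest : Wt g → Tab
  highest_shape : ∀ lam, shape (highest lam) = lam
  highest_tab : ∀ lam, IsTableau (highest lam)
  /-- insertion of one additional basic column of height `r`. -/
  addBasic : Fin (rank g) → Tab → Tab
  addBasic_shape : ∀ r t, shape (addBasic r t) = shape t + fw g r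
  addBasic_equiv : ∀ r t, BasicEquiv (addBasic r t) t
  /-- the bijection `Φ : RC(B^{⊗λ}) → B^{⊗λ}`. -/
  Phi : Wt g → Cfg g → Tab
  /-- the inverse bijection `Φ⁻¹ : B^{⊗λ} → RC(B^{⊗λ})`. -/
  PhiInv : Wt g → Tab → Cfg g
  phi_shape : ∀ lam ν, Valid g lam ν → shape (Phi lam ν) = lam
  phiInv_valid : ∀ lam t, shape t = lam → Valid g lam (PhiInv lam t)
  phi_left_inv : ∀ lam ν, Valid g lam ν → PhiInv lam (Phi lam ν) = ν
  phi_right_inv : ∀ lam t, shape t = lam → Phi lam (PhiInv lam t) = t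
  /-- `Φ` is a classical crystal isomorphism (Theorem 4.6 of the paper). -/
  phi_f : ∀ lam a ν ν', Valid g lam ν → fRel g a ν ν' → Valid g lam ν' →
      ftab a (Phi lam ν) = some (Phi lam ν')
  phi_f_none : ∀ lam a ν ν', Valid g lam ν → fRel g a ν ν' → ¬ Valid g lam ν' →
      ftab a (Phi lam ν) = none
  phi_e : ∀ lam a ν ν', Valid g lam ν → eRel g a ν ν' →
      etab a (Phi lam ν) = some (Phi lam ν')
  phi_e_none : ∀ lam a ν, Valid g lam ν → ¬(∃ ν', eRel g a ν ν') →
      etab a (Phi lam ν) = none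
  /-- the (total) lowering operator `f_a` of the marginally large tableaux
  model `T(∞)`. -/
  fml : Fin (rank g) → Tab → Tab
  /-- the raising operator `e_a` of the marginally large tableaux model. -/
  eml : Fin (rank g) → Tab → Option Tab
  /-- the weight function of the marginally large tableaux model. -/
  wtml : Tab → Wt g
  epsml : Fin (rank g) → Tab → ℤ
  phiml : Fin (rank g) → Tab → ℤ
  /-- `f_a` on `T(∞)` agrees, up to basic columns, with `f_a` computed on a
  suitable large representative (Lemma 3.2 of Hong–Lee). -/
  fml_spec : ∀ a T, IsTableau T → MarginallyLarge T →
      MarginallyLarge (fml a T) ∧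
      ∃ T₁ T₂, BasicEquiv T₁ T ∧ ftab a T₁ = some T₂ ∧ BasicEquiv T₂ (fml a T)
  eml_spec : ∀ a T T', IsTableau T → MarginallyLarge T → eml a T = some T' →
      MarginallyLarge T' ∧
      ∃ T₁ T₂, BasicEquiv T₁ T ∧ etab a T₁ = some T₂ ∧ BasicEquiv T₂ T'
  phiml_eps : ∀ a T, phiml a T - epsml a T = wtml T a
  wtml_fml : ∀ a T c, wtml (fml a T) c = wtml T c - cartan g c a

/-- The map `Ψ : RC(∞) → T(∞)`: project `(ν, J)` to `RC(λ_ν)`, apply `Φ`,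
and regard the result as a marginally large tableau. -/
def KRSetup.Psi {g : GType} (S : KRSetup g) (ν : Cfg g) : S.Tab :=
  S.Phi (lambdaNu g ν) ν

/-- The map `Ξ : T(∞) → RC(∞)`: project `T` to `T(λ_T)` (where `λ_T` is the
shape of `T`), embed it in `B^{⊗λ_T}` as the tensor product of its columns,
and apply `Φ⁻¹`. -/
def KRSetup.Xi {g : GType} (S : KRSetup g) (T : S.Tab) : Cfg g :=
  S.PhiInv (S.shape T) T

/-- The connected component of `B^{⊗λ}` generated by the highest weight
element `T_λ`, i.e. the embedded copy of `T(λ)`. -/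
inductive TabGen {g : GType} (S : KRSetup g) (lam : Wt g) : S.Tab → Prop
  | base : TabGen S lam (S.highest lam)
  | step {a : Fin (rank g)} {T T' : S.Tab} :
      TabGen S lam T → S.ftab a T = some T' → TabGen S lam T'

/-- An abstract family of highest weight crystals `B(λ)` together with the
natural projections `p : B(λ) → B(μ) ⊔ {0}`, `f_{a_k} ⋯ f_{a_1} u_λ ↦
f_{a_k} ⋯ f_{a_1} u_μ`. -/
structure HWFamily (g : GType) where
  B : Wt g → Type
  crys : ∀ lam, CrystalStruct g (B lam)
  /-- the highest weight element `u_λ`. -/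
  hw : ∀ lam, B lam
  hw_e : ∀ lam a, (crys lam).e a (hw lam) = none
  hw_wt : ∀ lam, (crys lam).wt (hw lam) = lam
  /-- the natural projection `B(λ) → B(μ) ⊔ {0}`. -/
  proj : ∀ lam mu, B lam → Option (B mu)
  proj_hw : ∀ lam mu, proj lam mu (hw lam) = some (hw mu)
  proj_f : ∀ lam mu a b b', (crys lam).f a b = some b' →
      proj lam mu b' = ((proj lam mu b).bind ((crys mu).f a))

/-- An abstract model of `B(∞)` together with a family of highest weight
crystals `B(λ)` and the natural projections `B(∞) → B(λ) ⊔ {0}`. -/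
structure BInfSetup (g : GType) extends HWFamily g where
  Binf : Type
  icrys : CrystalStruct g Binf
  /-- the highest weight element `u_∞`. -/
  uinf : Binf
  uinf_e : ∀ a, icrys.e a uinf = none
  uinf_wt : ∀ b, icrys.wt uinf b = 0
  /-- the natural projection `B(∞) → B(λ) ⊔ {0}`. -/
  projInf : ∀ lam, Binf → Option (B lam)
  projInf_hw : ∀ lam, projInf lam uinf = some (hw lam)
  projInf_f : ∀ lam a b b', icrys.f a b = some b' →
      projInf lam b' = ((projInf lam b).bind ((crys lam).f a))


/-! ### Auxiliary machinery for STATEMENT 0 -/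

/-- `S_M(i) = Σ_{(j,x) ∈ M} min(i,j)`. -/
private def Smx (M : Multiset (ℕ × ℤ)) (i : ℕ) : ℤ :=
  (M.map fun s => ((min i s.1 : ℕ) : ℤ)).sum

/-- number (as an integer) of strings in `M` of length `> k`. -/
private def cntx (M : Multiset (ℕ × ℤ)) (k : ℕ) : ℤ :=
  (M.map fun s => if k < s.1 then (1 : ℤ) else 0).sum

private lemma vac_eq_Smx (g : GType) (lam : Wt g) (ν : Cfg g) (a : Fin (rank g)) (i : ℕ) :
    vac g lam ν a i = lam a - ∑ b, cartan g a b * Smx (ν b) i := rfl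

private lemma Smx_zero (M : Multiset (ℕ × ℤ)) : Smx M 0 = 0 := by
  simp [Smx]

private lemma Smx_cons (p : ℕ × ℤ) (M : Multiset (ℕ × ℤ)) (k : ℕ) :
    Smx (p ::ₘ M) k = ((min k p.1 : ℕ) : ℤ) + Smx M k := by
  simp [Smx, Multiset.map_cons, Multiset.sum_cons]

private lemma Smx_succ (M : Multiset (ℕ × ℤ)) (k : ℕ) :
    Smx M (k + 1) = Smx M k + cntx M k := by
  rw [Smx, Smx, cntx, ← Multiset.sum_map_add]
  refine congrArg _ (Multiset.map_congr rfl fun s _ => ?_)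
  by_cases h : k < s.1
  · have h1 : min (k+1) s.1 = min k s.1 + 1 := by omega
    simp [h, h1]
    omega
  · have h1 : min (k+1) s.1 = min k s.1 := by omega
    simp [h, h1]

private lemma cntx_nonneg (M : Multiset (ℕ × ℤ)) (k : ℕ) : 0 ≤ cntx M k := by
  refine Multiset.sum_nonneg fun x hx => ?_
  obtain ⟨s, _, rfl⟩ := Multiset.mem_map.mp hx
  split <;> norm_num

private lemma cntx_le (M : Multiset (ℕ × ℤ)) (k k' : ℕ)
    (h : ∀ s ∈ M, k' < s.1 → k < s.1) : cntx M k' ≤ cntx M k := by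
  refine Multiset.sum_map_le_sum_map _ _ fun s hs => ?_
  by_cases h1 : k' < s.1
  · simp [h1, h s hs h1]
  · simp only [if_neg h1]
    split <;> norm_num

private lemma cntx_eq_zero (M : Multiset (ℕ × ℤ)) (k : ℕ)
    (h : ∀ s ∈ M, ¬ k < s.1) : cntx M k = 0 := by
  rw [cntx]
  refine Multiset.sum_eq_zero fun x hx => ?_
  obtain ⟨s, hs, rfl⟩ := Multiset.mem_map.mp hx
  simp [h s hs]

private lemma step_ge (f s : ℕ → ℤ) (hf : ∀ k, f (k + 1) = f k + s k) (t : ℕ) (c : ℤ) :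
    ∀ d : ℕ, (∀ k, t ≤ k → k < t + d → c ≤ s k) → f t + d * c ≤ f (t + d) := by
  intro d
  induction d with
  | zero => simp
  | succ d ih =>
    intro h
    have h1 := ih fun k hk hk' => h k hk (by omega)
    have h2 := h (t + d) (by omega) (by omega)
    have h3 := hf (t + d)
    have h4 : f t + ((d : ℤ) + 1) * c ≤ f (t + d + 1) := by rw [h3]; nlinarith
    have h5 : ((d + 1 : ℕ) : ℤ) = (d : ℤ) + 1 := by push_cast; ring
    rw [show t + (d + 1) = t + d + 1 from rfl, h5]
    exact h4

private lemma step_le (f s : ℕ → ℤ) (hf : ∀ k, f (k + 1) = f k + s k) (t : ℕ) (c : ℤ) :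
    ∀ d : ℕ, (∀ k, t ≤ k → k < t + d → s k ≤ c) → f (t + d) ≤ f t + d * c := by
  intro d
  induction d with
  | zero => simp
  | succ d ih =>
    intro h
    have h1 := ih fun k hk hk' => h k hk (by omega)
    have h2 := h (t + d) (by omega) (by omega)
    have h3 := hf (t + d)
    have h4 : f (t + d + 1) ≤ f t + ((d : ℤ) + 1) * c := by rw [h3]; nlinarith
    have h5 : ((d + 1 : ℕ) : ℤ) = (d : ℤ) + 1 := by push_cast; ring
    rw [show t + (d + 1) = t + d + 1 from rfl, h5]
    exact h4

private lemma chainE_self (v : ℕ) : chainE v v = 2 := by simp [chainE]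

private lemma chainE_nonpos (v w : ℕ) (h : v ≠ w) : chainE v w ≤ 0 := by
  unfold chainE
  split_ifs <;> omega

private lemma cartan_diag (g : GType) (a : Fin (rank g)) : cartan g a a = 2 := by
  cases g with
  | A n => exact chainE_self _
  | B n =>
    simp only [cartan]
    rw [if_neg (by rintro ⟨h1, h2, h3⟩; omega)]
    exact chainE_self _
  | C n =>
    simp only [cartan]
    rw [if_neg (by rintro ⟨h1, h2, h3⟩; omega)]
    exact chainE_self _
  | D n =>
    simp only [cartan]
    rw [if_neg (by rintro ⟨h1 | h1, h2⟩ <;> omega)]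
    by_cases h : a.val = n
    · simp [h]
    · rw [if_neg (by tauto)]
      exact chainE_self _
  | G => simp [cartan]

private lemma cartan_offdiag (g : GType) (a b : Fin (rank g)) (h : a ≠ b) :
    cartan g a b ≤ 0 := by
  have hv : a.val ≠ b.val := fun hh => h (Fin.ext hh)
  cases g with
  | A n => exact chainE_nonpos _ _ hv
  | B n =>
    simp only [cartan]
    split_ifs
    · norm_num
    · exact chainE_nonpos _ _ hv
  | C n =>
    simp only [cartan]
    split_ifs
    · norm_num
    · exact chainE_nonpos _ _ hv
  | D n =>
    simp only [cartan]
    by_cases h1 : ((a.val = n - 2 ∧ b.val = n) ∨ (a.val = n ∧ b.val = n - 2)) ∧ 2 ≤ n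
    · rw [if_pos h1]; norm_num
    · rw [if_neg h1]
      by_cases h2 : a.val = n ∨ b.val = n
      · rw [if_pos h2, if_neg h]
      · rw [if_neg h2]; exact chainE_nonpos _ _ hv
  | G =>
    simp only [cartan]
    split_ifs with h1 h2
    · exact absurd h1 h
    · norm_num
    · norm_num

/-- The key static lemma: if all riggings satisfy `x ≤ p_j^{(b)}(ν;0) + j`, then for
every `i ≥ 1` either `p_i^{(b)}(ν;0) ≥ 0` or some string `(j,x)` satisfies
`x ≤ p_i^{(b)}(ν;0) + min(i,j)`. -/
private lemma key (g : GType) (ν : Cfg g) (b : Fin (rank g))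
    (hinv : ∀ s ∈ ν b, s.2 ≤ vac g 0 ν b s.1 + (s.1 : ℤ)) (I : ℕ) :
    0 ≤ vac g 0 ν b (I + 1) ∨
      ∃ s ∈ ν b, s.2 ≤ vac g 0 ν b (I + 1) + ((min (I + 1) s.1 : ℕ) : ℤ) := by
  classical
  set V : ℕ → ℤ := fun k => vac g 0 ν b k with hV
  set Γ : ℕ → ℤ := fun k => V k + 2 * Smx (ν b) k with hΓdef
  set Γi : ℕ → ℤ := fun k => ∑ c, (if c = b then 0 else - cartan g b c) * cntx (ν c) k
    with hΓi
  have hVΓ : ∀ k, V k = Γ k - 2 * Smx (ν b) k := fun k => by rw [hΓdef]; ring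
  have hVk : ∀ k, V (k + 1) = V k - ∑ c, cartan g b c * cntx (ν c) k := by
    intro k
    simp only [hV, vac_eq_Smx, Pi.zero_apply]
    have : ∀ c ∈ Finset.univ, cartan g b c * Smx (ν c) (k + 1)
        = cartan g b c * Smx (ν c) k + cartan g b c * cntx (ν c) k := by
      intro c _
      rw [Smx_succ]; ring
    rw [Finset.sum_congr rfl this, Finset.sum_add_distrib]
    ring
  have hΓstep : ∀ k, Γ (k + 1) = Γ k + Γi k := by
    intro k
    have h1 : ∀ c ∈ Finset.univ, (if c = b then 0 else - cartan g b c) * cntx (ν c) k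
        = - (cartan g b c * cntx (ν c) k) + (if c = b then (2 : ℤ) * cntx (ν c) k else 0) := by
      intro c _
      by_cases hc : c = b
      · subst hc
        rw [cartan_diag]
        simp
      · simp only [if_neg hc]
        ring
    have h2 : (∑ c, (if c = b then 0 else - cartan g b c) * cntx (ν c) k)
        = - (∑ c, cartan g b c * cntx (ν c) k) + 2 * cntx (ν b) k := by
      rw [Finset.sum_congr rfl h1, Finset.sum_add_distrib,
        Finset.sum_ite_eq' Finset.univ b fun c => (2 : ℤ) * cntx (ν c) k]
      simp
    simp only [hΓdef, hΓi]
    rw [hVk k, Smx_succ (ν b) k, h2]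
    ring
  have hΓi_nonneg : ∀ k, 0 ≤ Γi k := by
    intro k
    refine Finset.sum_nonneg fun c _ => ?_
    by_cases hc : c = b
    · simp [hc]
    · have h1 := cartan_offdiag g b c (fun hh => hc hh.symm)
      simp only [if_neg hc]
      exact mul_nonneg (by linarith) (cntx_nonneg _ _)
  have hΓi_anti : ∀ k k', k ≤ k' → Γi k' ≤ Γi k := by
    intro k k' hkk
    refine Finset.sum_le_sum fun c _ => ?_
    have hcnt : cntx (ν c) k' ≤ cntx (ν c) k := cntx_le _ _ _ fun s _ h1 => by omega
    by_cases hc : c = b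
    · simp [hc]
    · have h1 := cartan_offdiag g b c (fun hh => hc hh.symm)
      simp only [if_neg hc]
      exact mul_le_mul_of_nonneg_left hcnt (by linarith)
  set m : ℤ := cntx (ν b) I with hm
  set γ : ℤ := Γi I with hγ
  rcases le_or_gt (2 * m) γ with hA | hB
  · -- Case A
    by_cases hex : ∃ s ∈ ν b, s.1 ≤ I + 1
    · obtain ⟨s0, hs0, hs0le⟩ := hex
      set P : ℕ → Prop := fun n => ∃ s ∈ ν b, s.1 = n with hP
      set J := Nat.findGreatest P (I + 1) with hJ
      have hJP : P J := Nat.findGreatest_spec hs0le ⟨s0, hs0, rfl⟩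
      have hJle : J ≤ I + 1 := Nat.findGreatest_le _
      have hJmax : ∀ s ∈ ν b, s.1 ≤ I + 1 → s.1 ≤ J := fun s hs hsle =>
        Nat.le_findGreatest hsle ⟨s, hs, rfl⟩
      obtain ⟨sw, hsw, hswJ⟩ := hJP
      set d := I + 1 - J with hd
      have hd1 : J + d = I + 1 := by omega
      have hΓge : Γ J + (d : ℤ) * γ ≤ Γ (J + d) :=
        step_ge Γ Γi hΓstep J γ d fun k hk hk' => hΓi_anti k I (by omega)
      have hSle : Smx (ν b) (J + d) ≤ Smx (ν b) J + (d : ℤ) * m := by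
        refine step_le (Smx (ν b)) (cntx (ν b)) (Smx_succ _) J m d fun k hk hk' => ?_
        refine cntx_le _ _ _ fun s hs h1 => ?_
        by_contra h2
        have h3 : s.1 ≤ J := hJmax s hs (by omega)
        omega
      have hprod : (0 : ℤ) ≤ (d : ℤ) * (γ - 2 * m) :=
        mul_nonneg (by positivity) (by linarith)
      have hVge : V J ≤ V (I + 1) := by
        have e1 := hVΓ (J + d)
        have e2 := hVΓ J
        rw [hd1] at e1
        rw [← hd1] at *
        nlinarith [hΓge, hSle]
      right
      refine ⟨sw, hsw, ?_⟩
      have h1 := hinv sw hsw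
      have hminJ : min (I + 1) sw.1 = sw.1 := by omega
      rw [hminJ]
      have h2 : (sw.1 : ℤ) = (J : ℤ) := by exact_mod_cast hswJ
      have h3 : V sw.1 = V J := by rw [hswJ]
      show sw.2 ≤ V (I + 1) + (sw.1 : ℤ)
      rw [h2]
      have h4 : sw.2 ≤ V J + (J : ℤ) := by rw [← h2, ← h3]; exact h1
      linarith
    · left
      have hno : ∀ s ∈ ν b, I + 1 < s.1 := by
        intro s hs
        by_contra h1
        exact hex ⟨s, hs, by omega⟩
      have hΓge : Γ 0 + ((I + 1 : ℕ) : ℤ) * γ ≤ Γ (0 + (I + 1)) :=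
        step_ge Γ Γi hΓstep 0 γ (I + 1) fun k hk hk' => hΓi_anti k I (by omega)
      have hSle : Smx (ν b) (0 + (I + 1)) ≤ Smx (ν b) 0 + ((I + 1 : ℕ) : ℤ) * m := by
        refine step_le (Smx (ν b)) (cntx (ν b)) (Smx_succ _) 0 m (I + 1) fun k hk hk' => ?_
        refine cntx_le _ _ _ fun s hs h1 => ?_
        have := hno s hs
        omega
      have hΓ0 : Γ 0 = 0 := by
        have hv0 : V 0 = 0 := by
          simp only [hV, vac_eq_Smx, Pi.zero_apply]
          have : ∀ c ∈ Finset.univ, cartan g b c * Smx (ν c) 0 = 0 := by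
            intro c _
            rw [Smx_zero]; ring
          rw [Finset.sum_congr rfl this]
          simp
        simp only [hΓdef]
        rw [hv0, Smx_zero]
        ring
      have hprod : (0 : ℤ) ≤ ((I + 1 : ℕ) : ℤ) * (γ - 2 * m) :=
        mul_nonneg (by positivity) (by linarith)
      have e1 := hVΓ (0 + (I + 1))
      have hS0 : Smx (ν b) 0 = 0 := Smx_zero _
      have : (0:ℕ) + (I + 1) = I + 1 := by omega
      rw [this] at e1 hΓge hSle
      show 0 ≤ V (I + 1)
      nlinarith [hΓge, hSle]
  · -- Case B
    have hγ0 : 0 ≤ γ := hΓi_nonneg I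
    have hm1 : 1 ≤ m := by omega
    have hexlong : ∃ s ∈ ν b, I < s.1 := by
      by_contra h1
      push_neg at h1
      have h2 := cntx_eq_zero (ν b) I fun s hs => by have := h1 s hs; omega
      rw [hm] at hm1
      omega
    have hEx : ∃ n, ∃ s ∈ ν b, s.1 = n ∧ I < n := by
      obtain ⟨s, hs, h1⟩ := hexlong
      exact ⟨s.1, s, hs, rfl, h1⟩
    set q := Nat.find hEx with hq
    obtain ⟨s1, hs1, hs1q, hIq⟩ := Nat.find_spec hEx
    have hqmin : ∀ s ∈ ν b, I < s.1 → q ≤ s.1 := fun s hs h1 =>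
      Nat.find_min' hEx ⟨s, hs, rfl, h1⟩
    set d := q - (I + 1) with hd
    have hd1 : (I + 1) + d = q := by omega
    have hΓle : Γ ((I + 1) + d) ≤ Γ (I + 1) + (d : ℤ) * γ :=
      step_le Γ Γi hΓstep (I + 1) γ d fun k hk hk' => hΓi_anti I k (by omega)
    have hSge : Smx (ν b) (I + 1) + (d : ℤ) * m ≤ Smx (ν b) ((I + 1) + d) := by
      refine step_ge (Smx (ν b)) (cntx (ν b)) (Smx_succ _) (I + 1) m d fun k hk hk' => ?_
      refine cntx_le _ _ _ fun s hs h1 => ?_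
      have := hqmin s hs h1
      omega
    have hprod : (d : ℤ) * (γ - 2 * m) ≤ (d : ℤ) * (-1) :=
      mul_le_mul_of_nonneg_left (by linarith) (by positivity)
    have hVq : V q + (d : ℤ) ≤ V (I + 1) := by
      have e1 := hVΓ ((I + 1) + d)
      have e2 := hVΓ (I + 1)
      rw [hd1] at e1 hΓle
      rw [hd1] at hSge
      nlinarith [hΓle, hSge]
    right
    refine ⟨s1, hs1, ?_⟩
    have h1 := hinv s1 hs1
    have hminq : min (I + 1) s1.1 = I + 1 := by omega
    rw [hminq]
    have h2 : (s1.1 : ℤ) = (q : ℤ) := by exact_mod_cast hs1q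
    have h3 : V s1.1 = V q := by rw [hs1q]
    have h5 : (q : ℤ) = ((I + 1 : ℕ) : ℤ) + (d : ℤ) := by push_cast; omega
    show s1.2 ≤ V (I + 1) + ((I + 1 : ℕ) : ℤ)
    have h6 : s1.2 ≤ V q + (q : ℤ) := by rw [← h2, ← h3]; exact h1
    push_cast at h5 ⊢
    linarith

private lemma Smx_map (M : Multiset (ℕ × ℤ)) (F : ℕ × ℤ → ℤ) (k : ℕ) :
    Smx (M.map fun s => (s.1, F s)) k = Smx M k := by
  simp [Smx, Multiset.map_map, Function.comp]

private lemma vac_shift (g : GType) (ν ν' : Cfg g) (a : Fin (rank g)) (δ : ℕ → ℤ)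
    (hsh : ∀ c k, Smx (ν' c) k = Smx (ν c) k + (if c = a then δ k else 0))
    (b : Fin (rank g)) (k : ℕ) :
    vac g 0 ν' b k = vac g 0 ν b k - cartan g b a * δ k := by
  rw [vac_eq_Smx, vac_eq_Smx]
  have h1 : ∀ c ∈ Finset.univ, cartan g b c * Smx (ν' c) k
      = cartan g b c * Smx (ν c) k + (if c = a then cartan g b a * δ k else 0) := by
    intro c _
    rw [hsh c k]
    by_cases hc : c = a
    · subst hc; rw [if_pos rfl, if_pos rfl]; ring
    · rw [if_neg hc, if_neg hc]; ring
  rw [Finset.sum_congr rfl h1, Finset.sum_add_distrib,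
    Finset.sum_ite_eq' Finset.univ a fun _ => cartan g b a * δ k]
  simp only [Finset.mem_univ, if_pos]
  ring

private lemma inv_step (g : GType) {a : Fin (rank g)} {ν ν' : Cfg g} (hf : fRel g a ν ν')
    (hinv : ∀ b, ∀ s ∈ ν b, s.2 ≤ vac g 0 ν b s.1 + (s.1 : ℤ)) :
    ∀ b, ∀ s ∈ ν' b, s.2 ≤ vac g 0 ν' b s.1 + (s.1 : ℤ) := by
  classical
  rcases hf with ⟨hpos, hb, ha⟩ | ⟨l, x, rest, hx0, hνa, hmin, hmax, hb, ha⟩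
  · -- case 1 : a new string (1,-1) is added
    have hsh : ∀ c k, Smx (ν' c) k = Smx (ν c) k +
        (if c = a then ((min k 1 : ℕ) : ℤ) else 0) := by
      intro c k
      by_cases hc : c = a
      · subst hc
        rw [ha, if_pos rfl, Smx_cons,
          show Smx (Multiset.map (fun s => (s.1, s.2 + vac g 0 ν' c s.1 - vac g 0 ν c s.1))
            (ν c)) k = Smx (ν c) k from Smx_map (ν c) _ k]
        ring
      · rw [hb c hc, if_neg hc, add_zero]
        exact Smx_map (ν c) _ k
    have hvac := vac_shift g ν ν' a _ hsh
    intro b s' hs'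
    by_cases hba : b = a
    · subst hba
      rw [ha] at hs'
      rcases Multiset.mem_cons.mp hs' with rfl | hs'
      · -- the new string (1,-1)
        have h0 : 0 ≤ vac g 0 ν b 1 := by
          rcases key g ν b (hinv b) 0 with h | ⟨s, hs, hle⟩
          · exact h
          · have h1 := hpos s hs
            have h2 : ((min 1 s.1 : ℕ) : ℤ) ≤ 1 := by
              have : min 1 s.1 ≤ 1 := min_le_left _ _
              exact_mod_cast this
            linarith
        show (-1 : ℤ) ≤ vac g 0 ν' b 1 + ((1 : ℕ) : ℤ)
        have h1 := hvac b 1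
        rw [cartan_diag] at h1
        have h2 : ((min 1 1 : ℕ) : ℤ) = 1 := by norm_num
        rw [h2] at h1
        push_cast
        linarith
      · obtain ⟨s, hs, rfl⟩ := Multiset.mem_map.mp hs'
        have h1 := hinv b s hs
        show s.2 + vac g 0 ν' b s.1 - vac g 0 ν b s.1 ≤ vac g 0 ν' b s.1 + (s.1 : ℤ)
        linarith
    · rw [hb b hba] at hs'
      obtain ⟨s, hs, rfl⟩ := Multiset.mem_map.mp hs'
      have h1 := hinv b s hs
      show s.2 + vac g 0 ν' b s.1 - vac g 0 ν b s.1 ≤ vac g 0 ν' b s.1 + (s.1 : ℤ)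
      linarith
  · -- case 2 : the string (l,x) is replaced by (l+1, x-1)
    have hSνa : ∀ k, Smx (ν a) k = ((min k l : ℕ) : ℤ) + Smx rest k := by
      intro k
      rw [hνa, Smx_cons]
    have hsh : ∀ c k, Smx (ν' c) k = Smx (ν c) k +
        (if c = a then ((min k (l + 1) : ℕ) : ℤ) - ((min k l : ℕ) : ℤ) else 0) := by
      intro c k
      by_cases hc : c = a
      · subst hc
        rw [ha, if_pos rfl, Smx_cons,
          show Smx (Multiset.map (fun s => (s.1, s.2 + vac g 0 ν' c s.1 - vac g 0 ν c s.1))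
            rest) k = Smx rest k from Smx_map rest _ k, hSνa k]
        ring
      · rw [hb c hc, if_neg hc, add_zero]
        exact Smx_map (ν c) _ k
    have hvac := vac_shift g ν ν' a _ hsh
    intro b s' hs'
    by_cases hba : b = a
    · subst hba
      rw [ha] at hs'
      rcases Multiset.mem_cons.mp hs' with rfl | hs'
      · -- the new string (l+1, x-1)
        have hkey : x ≤ vac g 0 ν b (l + 1) + (l : ℤ) := by
          rcases key g ν b (hinv b) l with h | ⟨s, hs, hle⟩
          · have : (0 : ℤ) ≤ (l : ℤ) := by positivity
            linarith
          · have hxs := hmin s hs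
            by_cases hsl : s.1 ≤ l
            · have h2 : min (l + 1) s.1 = s.1 := by omega
              rw [h2] at hle
              have h3 : (s.1 : ℤ) ≤ (l : ℤ) := by exact_mod_cast hsl
              linarith
            · have hlt : x < s.2 := by
                rcases lt_or_eq_of_le hxs with h2 | h2
                · exact h2
                · exact absurd (hmax s hs h2.symm) hsl
              have h2 : min (l + 1) s.1 = l + 1 := by omega
              rw [h2] at hle
              have h3 : ((l + 1 : ℕ) : ℤ) = (l : ℤ) + 1 := by push_cast; ring
              rw [h3] at hle
              linarith
        show x - 1 ≤ vac g 0 ν' b (l + 1) + ((l + 1 : ℕ) : ℤ)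
        have h1 := hvac b (l + 1)
        rw [cartan_diag] at h1
        have h2 : ((min (l + 1) (l + 1) : ℕ) : ℤ) - ((min (l + 1) l : ℕ) : ℤ) = 1 := by
          have e1 : min (l + 1) (l + 1) = l + 1 := min_self _
          have e2 : min (l + 1) l = l := by omega
          rw [e1, e2]
          push_cast
          ring
        rw [h2] at h1
        push_cast
        linarith
      · obtain ⟨s, hs, rfl⟩ := Multiset.mem_map.mp hs'
        have hsm : s ∈ ν b := by rw [hνa]; exact Multiset.mem_cons_of_mem hs
        have h1 := hinv b s hsm
        show s.2 + vac g 0 ν' b s.1 - vac g 0 ν b s.1 ≤ vac g 0 ν' b s.1 + (s.1 : ℤ)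
        linarith
    · rw [hb b hba] at hs'
      obtain ⟨s, hs, rfl⟩ := Multiset.mem_map.mp hs'
      have h1 := hinv b s hs
      show s.2 + vac g 0 ν' b s.1 - vac g 0 ν b s.1 ≤ vac g 0 ν' b s.1 + (s.1 : ℤ)
      linarith

private lemma rcinf_inv (g : GType) (ν : Cfg g) (h : RCInf g ν) :
    ∀ b, ∀ s ∈ ν b, s.2 ≤ vac g 0 ν b s.1 + (s.1 : ℤ) := by
  induction h with
  | empty =>
    intro b s hs
    simp [emptyCfg] at hs
  | step _ hf ih => exact inv_step _ hf ih

private lemma psize_nonneg (M : Multiset (ℕ × ℤ)) : 0 ≤ psize M := by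
  refine Multiset.sum_nonneg fun x hx => ?_
  obtain ⟨s, _, rfl⟩ := Multiset.mem_map.mp hx
  positivity

private lemma le_psize (M : Multiset (ℕ × ℤ)) (s : ℕ × ℤ) (hs : s ∈ M) :
    (s.1 : ℤ) ≤ psize M := by
  refine Multiset.single_le_sum (fun x hx => ?_) _ (Multiset.mem_map_of_mem _ hs)
  obtain ⟨t, _, rfl⟩ := Multiset.mem_map.mp hx
  positivity

private lemma lt_lambdaNu (g : GType) (ν : Cfg g) (a : Fin (rank g)) (s : ℕ × ℤ)
    (hs : s ∈ ν a) : (s.1 : ℤ) < lambdaNu g ν a := by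
  have h1 : (s.1 : ℤ) ≤ psize (ν a) := le_psize _ _ hs
  have h0 : 0 ≤ psize (ν a) := psize_nonneg _
  cases g with
  | A n => simp only [lambdaNu]; linarith
  | B n =>
    simp only [lambdaNu]
    split_ifs
    · linarith
    · linarith
  | C n => simp only [lambdaNu]; linarith
  | D n =>
    simp only [lambdaNu]
    split_ifs with hcond
    · rcases hcond with hc | hc
      · have ha : a = ⟨n - 1, by simp only [rank]; omega⟩ := Fin.ext hc
        rw [ha] at h1
        have h2 := le_max_left (psize (ν ⟨n - 1, by simp only [rank]; omega⟩))
          (psize (ν ⟨n, by simp only [rank]; omega⟩))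
        linarith
      · have ha : a = ⟨n, by simp only [rank]; omega⟩ := Fin.ext hc
        rw [ha] at h1
        have h2 := le_max_right (psize (ν ⟨n - 1, by simp only [rank]; omega⟩))
          (psize (ν ⟨n, by simp only [rank]; omega⟩))
        linarith
    · linarith
  | G => simp only [lambdaNu]; linarith


/-- If `(ν, J) ∈ RC(∞)`, then `(ν, J)` is valid for `λ_ν`:
every rigging `x` of a string of length `i` in `ν^{(a)}` satisfies
`x ≤ p_i^{(a)}(ν; λ_ν)`. -/
theorem rcinf_valid_lambdaNu (g : GType) (ν : Cfg g) (h : RCInf g ν) :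
    Valid g (lambdaNu g ν) ν := by
  intro a s hs
  have h1 := rcinf_inv g ν h a s hs
  have h2 := lt_lambdaNu g ν a s hs
  have h3 : vac g (lambdaNu g ν) ν a s.1 = lambdaNu g ν a + vac g 0 ν a s.1 := by
    rw [vac_eq_Smx, vac_eq_Smx]
    simp only [Pi.zero_apply]
    ring
  rw [h3]
  linarith


end RCMLT
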